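/- Let p be a prime, G a finite p-group, and x, y elements of G. Then for any k ≥ 0, [x,y]^{p^k} ≡ [x^{p^k}, y] modulo the subgroup γ_2(M)^{p^k} γ_p(M)^{p^{k-1}} γ_{p^2}(M)^{p^{k-2}} ⋯ γ_{p^k}(M), where M = ⟨x, [x,y]⟩. -/

import Mathlib

open scoped commutatorElement

namespace HallAux

/-- Hockey stick identity. -/
theorem sum_range_choose_eq (j n : ℕ) :
    (∑ m ∈ Finset.range n, (m.choose j : ℤ)) = (n.choose (j+1) : ℤ) := by
  induction n with
  | zero => simp
  | succ n ih =>
    rw [Finset.sum_range_succ, ih]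
    have : (n+1).choose (j+1) = n.choose j + n.choose (j+1) := Nat.choose_succ_succ n j
    push_cast [this]; ring

/-- `e` is an integer combination of binomial coefficients of index `≤ d`. -/
def IsBin (d : ℕ) (e : ℕ → ℤ) : Prop :=
  ∃ c : ℕ → ℤ, (∀ j, d < j → c j = 0) ∧
    ∀ n, e n = ∑ j ∈ Finset.range (d+1), c j * (n.choose j : ℤ)

theorem isBin_const (z : ℤ) : IsBin 0 (fun _ => z) :=
  ⟨fun j => if j = 0 then z else 0, fun j hj => by simp [Nat.pos_iff_ne_zero.mp hj],
    fun n => by simp⟩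

theorem isBin_id : IsBin 1 (fun n => (n : ℤ)) := by
  refine ⟨fun j => if j = 1 then 1 else 0, fun j hj => by simp only [if_neg (by omega : ¬ j = 1)], fun n => ?_⟩
  rw [Finset.sum_range_succ, Finset.sum_range_one]
  simp

theorem isBin_neg {d e} (h : IsBin d e) : IsBin d (fun n => - e n) := by
  obtain ⟨c, hc0, hc⟩ := h
  exact ⟨fun j => - c j, fun j hj => by simp [hc0 j hj], fun n => by
    simp [hc n, Finset.sum_neg_distrib]⟩

theorem isBin_zero_eval {e} (h : IsBin 0 e) (m : ℕ) : e m = e 0 := by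
  obtain ⟨c, _, hc⟩ := h
  simp [hc m, hc 0]

theorem choose_shift_sum (c : ℕ → ℤ) (d n : ℕ) (hc0 : c (d+1) = 0) :
    (∑ j ∈ Finset.range (d+1), c j * (((n+1).choose j : ℕ) : ℤ))
      = (∑ j ∈ Finset.range (d+1), c j * (n.choose j : ℤ))
        + ∑ j ∈ Finset.range (d+1), c (j+1) * (n.choose j : ℤ) := by
  rw [Finset.sum_range_succ' (fun j => c j * (((n+1).choose j : ℕ) : ℤ)) d,
    Finset.sum_range_succ' (fun j => c j * ((n.choose j : ℕ) : ℤ)) d,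
    Finset.sum_range_succ (fun j => c (j+1) * ((n.choose j : ℕ) : ℤ)) d]
  simp only [Nat.choose_succ_succ n, Nat.cast_add, mul_add, Finset.sum_add_distrib,
    Nat.choose_zero_right, Nat.cast_one, hc0]
  ring

theorem isBin_shift {d e} (h : IsBin d e) : IsBin d (fun n => e (n+1)) := by
  obtain ⟨c, hc0, hc⟩ := h
  refine ⟨fun j => c j + c (j+1), fun j hj => by simp [hc0 j hj, hc0 (j+1) (by omega)],
    fun n => ?_⟩
  show e (n+1) = _
  rw [hc (n+1), choose_shift_sum c d n (hc0 (d+1) (by omega)), ← Finset.sum_add_distrib]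
  exact Finset.sum_congr rfl fun j _ => by ring

theorem isBin_diff {d e} (h : IsBin (d+1) e) : IsBin d (fun n => e (n+1) - e n) := by
  obtain ⟨c, hc0, hc⟩ := h
  refine ⟨fun j => c (j+1), fun j hj => hc0 (j+1) (by omega), fun n => ?_⟩
  show e (n+1) - e n = _
  rw [hc (n+1), hc n, choose_shift_sum c (d+1) n (hc0 (d+2) (by omega))]
  rw [Finset.sum_range_succ (fun j => c (j+1) * ((n.choose j : ℕ) : ℤ)) (d+1)]
  simp [hc0 (d+2) (by omega)]

theorem isBin_sum {d e} (h : IsBin d e) :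
    IsBin (d+1) (fun n => ∑ m ∈ Finset.range n, e m) := by
  obtain ⟨c, hc0, hc⟩ := h
  refine ⟨fun j => if j = 0 then 0 else c (j-1), fun j hj => ?_, fun n => ?_⟩
  · have : j ≠ 0 := by omega
    simp [this, hc0 (j-1) (by omega)]
  · show (∑ m ∈ Finset.range n, e m) = _
    have h1 : (∑ m ∈ Finset.range n, e m)
        = ∑ j ∈ Finset.range (d+1), c j * ((n.choose (j+1) : ℕ) : ℤ) := by
      rw [show (∑ m ∈ Finset.range n, e m)
          = ∑ m ∈ Finset.range n, ∑ j ∈ Finset.range (d+1), c j * ((m.choose j : ℕ) : ℤ) from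
        Finset.sum_congr rfl fun m _ => hc m, Finset.sum_comm]
      refine Finset.sum_congr rfl fun j _ => ?_
      rw [← Finset.mul_sum, sum_range_choose_eq]
    rw [h1, Finset.sum_range_succ'
      (fun j => (if j = 0 then 0 else c (j-1)) * ((n.choose j : ℕ) : ℤ)) (d+1)]
    simp

end HallAux


namespace HallAux

variable {H : Type*} [Group H]

/-- The lower central series of the group `H`. -/
abbrev lowerCentralSeries (H : Type*) [Group H] (n : ℕ) : Subgroup H :=
  Subgroup.lowerCentralSeries (⊤ : Subgroup H) n

/-! ### Commutator identities -/

theorem comm_mul_left (a b c : H) : ⁅a * b, c⁆ = a * ⁅b, c⁆ * a⁻¹ * ⁅a, c⁆ := by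
  simp only [commutatorElement_def]; group

theorem comm_mul_right (a b c : H) : ⁅a, b * c⁆ = ⁅a, b⁆ * (b * ⁅a, c⁆ * b⁻¹) := by
  simp only [commutatorElement_def]; group

theorem conj_eq_mul_comm (g x : H) : g * x * g⁻¹ = x * ⁅x⁻¹, g⁆ := by
  simp only [commutatorElement_def]; group

/-! ### Lower central series commutator estimates -/

/-- General three subgroups lemma. -/
theorem three_subgroups {H₁ H₂ H₃ N : Subgroup H} [N.Normal]
    (h1 : ⁅⁅H₂, H₃⁆, H₁⁆ ≤ N) (h2 : ⁅⁅H₃, H₁⁆, H₂⁆ ≤ N) : ⁅⁅H₁, H₂⁆, H₃⁆ ≤ N := by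
  let π := QuotientGroup.mk' N
  have key : ∀ {K : Subgroup H}, K ≤ N ↔ Subgroup.map π K = ⊥ := by
    intro K
    rw [Subgroup.map_eq_bot_iff, QuotientGroup.ker_mk']
  rw [key] at h1 h2 ⊢
  rw [Subgroup.map_commutator, Subgroup.map_commutator] at h1 h2 ⊢
  exact Subgroup.commutator_commutator_eq_bot_of_rotate h1 h2

theorem lcs_comm_le (i j : ℕ) :
    ⁅lowerCentralSeries H i, lowerCentralSeries H j⁆ ≤ lowerCentralSeries H (i + j + 1) := by
  induction j generalizing i with
  | zero =>
    exact le_of_eq (rfl : lowerCentralSeries H (i+1) = ⁅lowerCentralSeries H i, ⊤⁆).symm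
  | succ j ih =>
    have ht : lowerCentralSeries H (j+1) = ⁅lowerCentralSeries H j, ⊤⁆ := rfl
    rw [ht, Subgroup.commutator_comm (lowerCentralSeries H i)]
    refine three_subgroups ?_ ?_
    · -- ⁅⁅⊤, L i⁆, L j⁆ ≤ L (i+j+2)
      rw [Subgroup.commutator_comm (⊤ : Subgroup H)]
      rw [show ⁅lowerCentralSeries H i, (⊤:Subgroup H)⁆ = lowerCentralSeries H (i+1) from rfl]
      have := ih (i := i+1)
      calc ⁅lowerCentralSeries H (i+1), lowerCentralSeries H j⁆
          ≤ lowerCentralSeries H (i+1+j+1) := this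
        _ ≤ lowerCentralSeries H (i + (j+1) + 1) := by
            apply le_of_eq; congr 1; omega
    · -- ⁅⁅L i, L j⁆, ⊤⁆ ≤ L (i+j+2)
      calc ⁅⁅lowerCentralSeries H i, lowerCentralSeries H j⁆, ⊤⁆
          ≤ ⁅lowerCentralSeries H (i+j+1), ⊤⁆ :=
            Subgroup.commutator_mono (ih (i := i)) le_rfl
        _ = lowerCentralSeries H (i + (j+1) + 1) := rfl

theorem mem_lcs_comm {a b : H} {i j : ℕ} (ha : a ∈ lowerCentralSeries H i)
    (hb : b ∈ lowerCentralSeries H j) : ⁅a, b⁆ ∈ lowerCentralSeries H (i + j + 1) :=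
  lcs_comm_le i j (Subgroup.commutator_mem_commutator ha hb)

theorem lcs_le_of_le {i j : ℕ} (h : i ≤ j) :
    lowerCentralSeries H j ≤ lowerCentralSeries H i := Subgroup.lowerCentralSeries_antitone ⊤ h

/-! ### Monomial lists -/

/-- Evaluation of a list of monomials `(e, h)` at `n` as `∏ h ^ e n`. -/
def evalL (ms : List ((ℕ → ℤ) × H)) (n : ℕ) : H :=
  (ms.map fun x => x.2 ^ (x.1 n)).prod

@[simp] theorem evalL_nil (n : ℕ) : evalL ([] : List ((ℕ → ℤ) × H)) n = 1 := rfl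

theorem evalL_cons (x : (ℕ → ℤ) × H) (ms : List ((ℕ → ℤ) × H)) (n : ℕ) :
    evalL (x :: ms) n = x.2 ^ (x.1 n) * evalL ms n := by
  simp [evalL]

theorem evalL_append (ms₁ ms₂ : List ((ℕ → ℤ) × H)) (n : ℕ) :
    evalL (ms₁ ++ ms₂) n = evalL ms₁ n * evalL ms₂ n := by
  simp [evalL]

/-- Formal inverse of a monomial list. -/
def invL (ms : List ((ℕ → ℤ) × H)) : List ((ℕ → ℤ) × H) :=
  (ms.map fun x => (x.1, x.2⁻¹)).reverse

theorem evalL_invL (ms : List ((ℕ → ℤ) × H)) (n : ℕ) :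
    evalL (invL ms) n = (evalL ms n)⁻¹ := by
  induction ms with
  | nil => simp [invL]
  | cons x ms ih =>
    rw [evalL_cons, mul_inv_rev, ← ih]
    simp only [invL, List.map_cons, List.reverse_cons]
    rw [show ((ms.map fun x => (x.1, x.2⁻¹)).reverse ++ [(x.1, x.2⁻¹)] : List ((ℕ → ℤ) × H))
        = (ms.map fun x => (x.1, x.2⁻¹)).reverse ++ [(x.1, x.2⁻¹)] from rfl, evalL_append]
    simp [evalL, inv_zpow]

/-- Conjugating every element of a monomial list. -/
def conjL (g : H) (ms : List ((ℕ → ℤ) × H)) : List ((ℕ → ℤ) × H) :=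
  ms.map fun x => (x.1, g * x.2 * g⁻¹)

theorem evalL_conjL (g : H) (ms : List ((ℕ → ℤ) × H)) (n : ℕ) :
    evalL (conjL g ms) n = g * evalL ms n * g⁻¹ := by
  induction ms with
  | nil => simp [conjL]
  | cons x ms ih =>
    rw [show conjL g (x :: ms) = (x.1, g * x.2 * g⁻¹) :: conjL g ms from rfl,
      evalL_cons, ih, evalL_cons]
    rw [conj_zpow]
    group

/-! ### Goodness predicates -/

/-- A monomial is good for level `lm` and margin `t`. -/
def MonoP (lm t : ℕ) (x : (ℕ → ℤ) × H) : Prop :=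
  ∃ l d, lm ≤ l ∧ x.2 ∈ lowerCentralSeries H l ∧ IsBin d x.1 ∧ d + t ≤ l + 1

def GoodL (lm t : ℕ) (ms : List ((ℕ → ℤ) × H)) : Prop := ∀ x ∈ ms, MonoP lm t x

def VAN (ms : List ((ℕ → ℤ) × H)) : Prop := ∀ x ∈ ms, x.1 0 = 0

theorem monoP_mono {lm t lm' t' : ℕ} {x : (ℕ → ℤ) × H} (h : MonoP lm t x)
    (h1 : lm' ≤ lm) (h2 : t' ≤ t) : MonoP lm' t' x := by
  obtain ⟨l, d, hl, hx, hb, hd⟩ := h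
  exact ⟨l, d, le_trans h1 hl, hx, hb, by omega⟩

theorem goodL_mono {lm t lm' t' : ℕ} {ms : List ((ℕ → ℤ) × H)} (h : GoodL lm t ms)
    (h1 : lm' ≤ lm) (h2 : t' ≤ t) : GoodL lm' t' ms :=
  fun x hx => monoP_mono (h x hx) h1 h2

theorem goodL_append {lm t : ℕ} {ms₁ ms₂ : List ((ℕ → ℤ) × H)} (h1 : GoodL lm t ms₁)
    (h2 : GoodL lm t ms₂) : GoodL lm t (ms₁ ++ ms₂) := by
  intro x hx
  rcases List.mem_append.mp hx with h | h
  exacts [h1 x h, h2 x h]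

theorem van_append {ms₁ ms₂ : List ((ℕ → ℤ) × H)} (h1 : VAN ms₁) (h2 : VAN ms₂) :
    VAN (ms₁ ++ ms₂) := by
  intro x hx
  rcases List.mem_append.mp hx with h | h
  exacts [h1 x h, h2 x h]

theorem goodL_invL {lm t : ℕ} {ms : List ((ℕ → ℤ) × H)} (h : GoodL lm t ms) :
    GoodL lm t (invL ms) := by
  intro x hx
  simp only [invL, List.mem_reverse, List.mem_map] at hx
  obtain ⟨y, hy, rfl⟩ := hx
  obtain ⟨l, d, hl, hmem, hb, hd⟩ := h y hy
  exact ⟨l, d, hl, inv_mem hmem, hb, hd⟩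

theorem van_invL {ms : List ((ℕ → ℤ) × H)} (h : VAN ms) : VAN (invL ms) := by
  intro x hx
  simp only [invL, List.mem_reverse, List.mem_map] at hx
  obtain ⟨y, hy, rfl⟩ := hx
  exact h y hy

theorem goodL_conjL {lm t : ℕ} {g : H} {ms : List ((ℕ → ℤ) × H)} (h : GoodL lm t ms) :
    GoodL lm t (conjL g ms) := by
  intro x hx
  simp only [conjL, List.mem_map] at hx
  obtain ⟨y, hy, rfl⟩ := hx
  obtain ⟨l, d, hl, hmem, hb, hd⟩ := h y hy
  exact ⟨l, d, hl, (Subgroup.lowerCentralSeries_normal (⊤ : Subgroup H) l).conj_mem _ hmem _, hb, hd⟩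

theorem van_conjL {g : H} {ms : List ((ℕ → ℤ) × H)} (h : VAN ms) : VAN (conjL g ms) := by
  intro x hx
  simp only [conjL, List.mem_map] at hx
  obtain ⟨y, hy, rfl⟩ := hx
  exact h y hy

theorem evalL_mem_lcs {lm t : ℕ} {ms : List ((ℕ → ℤ) × H)} (h : GoodL lm t ms) (n : ℕ) :
    evalL ms n ∈ lowerCentralSeries H lm := by
  induction ms with
  | nil => simp
  | cons x ms ih =>
    rw [evalL_cons]
    obtain ⟨l, d, hl, hmem, _, _⟩ := h x (List.mem_cons_self)
    exact mul_mem (zpow_mem (lcs_le_of_le hl hmem) _) (ih fun y hy => h y (List.mem_cons_of_mem _ hy))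

/-! ### Products over ranges -/

/-- Ordered product `f 0 * f 1 * ⋯ * f (n-1)`. -/
def PP (f : ℕ → H) (n : ℕ) : H := ((List.range n).map f).prod

@[simp] theorem PP_zero (f : ℕ → H) : PP f 0 = 1 := rfl

theorem PP_succ (f : ℕ → H) (n : ℕ) : PP f (n+1) = PP f n * f n := by
  simp [PP, List.range_succ]

theorem PP_congr {f g : ℕ → H} (h : ∀ n, f n = g n) (n : ℕ) : PP f n = PP g n := by
  induction n with
  | zero => rfl
  | succ n ih => rw [PP_succ, PP_succ, ih, h]

/-- Telescoping conjugation identity. -/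
theorem PP_telescope (A g S : ℕ → H) (hS0 : S 0 = 1) (hS : ∀ n, S (n+1) = S n * A n) (n : ℕ) :
    PP (fun m => A m * g m) n = PP (fun m => S (m+1) * g m * (S (m+1))⁻¹) n * S n := by
  induction n with
  | zero => simp [hS0]
  | succ n ih =>
    rw [PP_succ, PP_succ, ih, hS n]
    group

/-- Power monomials: `PP (fun m => h ^ e m) n = h ^ (∑ m < n, e m)`. -/
theorem PP_zpow (h : H) (e : ℕ → ℤ) (n : ℕ) :
    PP (fun m => h ^ (e m)) n = h ^ (∑ m ∈ Finset.range n, e m) := by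
  induction n with
  | zero => simp
  | succ n ih => rw [PP_succ, ih, Finset.sum_range_succ, zpow_add]

end HallAux


namespace HallAux

variable {H : Type*} [Group H]

theorem evalL_singleton (x : (ℕ → ℤ) × H) (n : ℕ) : evalL [x] n = x.2 ^ (x.1 n) := by
  simp [evalL]

theorem evalL_van_zero {ms : List ((ℕ → ℤ) × H)} (h : VAN ms) : evalL ms 0 = 1 := by
  induction ms with
  | nil => rfl
  | cons x ms ih =>
    rw [evalL_cons, h x (List.mem_cons_self), zpow_zero, one_mul]
    exact ih fun y hy => h y (List.mem_cons_of_mem _ hy)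

theorem evalL_eq_one {ms : List ((ℕ → ℤ) × H)} (h : ∀ x ∈ ms, x.2 = 1) (n : ℕ) :
    evalL ms n = 1 := by
  induction ms with
  | nil => rfl
  | cons x ms ih =>
    rw [evalL_cons, h x (List.mem_cons_self), one_zpow, one_mul]
    exact ih fun y hy => h y (List.mem_cons_of_mem _ hy)

theorem PP_one (n : ℕ) : PP (fun _ => (1 : H)) n = 1 := by
  induction n with
  | zero => rfl
  | succ n ih => rw [PP_succ, ih, mul_one]

theorem goodL_nil (lm t : ℕ) : GoodL lm t ([] : List ((ℕ → ℤ) × H)) :=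
  fun x hx => absurd hx (List.not_mem_nil)

theorem van_nil : VAN ([] : List ((ℕ → ℤ) × H)) :=
  fun x hx => absurd hx (List.not_mem_nil)

theorem goodL_singleton {lm t : ℕ} {x : (ℕ → ℤ) × H} (h : MonoP lm t x) : GoodL lm t [x] := by
  intro z hz
  rw [List.mem_singleton] at hz
  subst hz
  exact h

/-- Statement of the swap (commutator) part of the collection machine. -/
def SwapStmt (c : ℕ) (H : Type*) [Group H] (μ : ℕ) : Prop :=
  ∀ l₁ l₂ : ℕ, c - (l₁ + l₂) ≤ μ → ∀ t₁ t₂ (ms₁ ms₂ : List ((ℕ → ℤ) × H)),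
    GoodL l₁ t₁ ms₁ → GoodL l₂ t₂ ms₂ →
    ∃ ms, GoodL (l₁ + l₂ + 1) (t₁ + t₂) ms ∧
      (∀ n, ⁅evalL ms₁ n, evalL ms₂ n⁆ = evalL ms n) ∧
      ((VAN ms₁ ∨ VAN ms₂) → VAN ms)

/-- Statement of the integration part of the collection machine. -/
def IntStmt (c : ℕ) (H : Type*) [Group H] (μ : ℕ) : Prop :=
  ∀ lm : ℕ, 1 ≤ lm → c - lm ≤ μ → ∀ t (ms : List ((ℕ → ℤ) × H)), GoodL lm (t + 1) ms →
    ∃ ms', GoodL lm t ms' ∧ VAN ms' ∧ ∀ n, PP (evalL ms) n = evalL ms' n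

theorem master (c : ℕ) (hc : lowerCentralSeries H c = ⊥) (μ : ℕ) :
    SwapStmt c H μ ∧ IntStmt c H μ := by
  induction μ using Nat.strong_induction_on with
  | _ μ IH =>
  constructor
  · -- SWAP part
    intro l₁ l₂ hμ t₁ t₂ ms₁ ms₂ hms₁ hms₂
    by_cases hbase : c ≤ l₁ + l₂
    · -- trivial case: everything is deep enough to vanish
      refine ⟨[], goodL_nil _ _, fun n => ?_, fun _ => van_nil⟩
      have h1 : evalL ms₁ n ∈ lowerCentralSeries H l₁ := evalL_mem_lcs hms₁ n
      have h2 : evalL ms₂ n ∈ lowerCentralSeries H l₂ := evalL_mem_lcs hms₂ n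
      have hm : ⁅evalL ms₁ n, evalL ms₂ n⁆ ∈ lowerCentralSeries H (l₁ + l₂ + 1) :=
        mem_lcs_comm h1 h2
      have hb : lowerCentralSeries H (l₁ + l₂ + 1) ≤ ⊥ := by
        rw [← hc]; exact lcs_le_of_le (by omega)
      simpa using hb hm
    push_neg at hbase
    have hμ1 : 1 ≤ μ := by omega
    have IHS : SwapStmt c H (μ - 1) := (IH (μ - 1) (by omega)).1
    have IHI : IntStmt c H (μ - 1) := (IH (μ - 1) (by omega)).2
    -- conjugation helper (at measures below μ)
    have conj_aux : ∀ la ta lb tb (msx msg : List ((ℕ → ℤ) × H)), c - (la + lb) ≤ μ - 1 →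
        GoodL la ta msx → GoodL lb tb msg →
        ∃ ms', GoodL la ta ms' ∧
          (∀ n, evalL msg n * evalL msx n * (evalL msg n)⁻¹ = evalL ms' n) ∧
          (VAN msx → VAN ms') := by
      intro la ta lb tb msx msg hm hx hg
      obtain ⟨msw, hw, hweval, hwvan⟩ := IHS la lb hm ta tb (invL msx) msg (goodL_invL hx) hg
      refine ⟨msx ++ msw, goodL_append hx (goodL_mono hw (by omega) (by omega)), fun n => ?_,
        fun hv => ?_⟩
      · rw [evalL_append, conj_eq_mul_comm, ← evalL_invL msx n, hweval n]
      · exact van_append hv (hwvan (Or.inl (van_invL hv)))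
    -- constant commutator monomials
    have swapconst : ∀ a b t₁' t₂' (h₁ h₂ : H) (P Q : ℕ → ℤ), l₁ ≤ a → l₂ ≤ b →
        h₁ ∈ lowerCentralSeries H a → h₂ ∈ lowerCentralSeries H b →
        IsBin 0 P → IsBin 0 Q → t₁' ≤ a + 1 → t₂' ≤ b + 1 →
        ∃ ms, GoodL (a + b + 1) (t₁' + t₂') ms ∧
          (∀ m, ⁅h₁ ^ P m, h₂ ^ Q m⁆ = evalL ms m) ∧
          ((P 0 = 0 ∨ Q 0 = 0) → VAN ms) := by
      intro a b t₁' t₂' h₁ h₂ P Q ha hb hh₁ hh₂ hP hQ hm₁ hm₂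
      by_cases h0 : P 0 = 0 ∨ Q 0 = 0
      · refine ⟨[], goodL_nil _ _, fun m => ?_, fun _ => van_nil⟩
        rw [isBin_zero_eval hP m, isBin_zero_eval hQ m]
        rcases h0 with h0 | h0
        · rw [h0, zpow_zero, commutatorElement_one_left]; rfl
        · rw [h0, zpow_zero, commutatorElement_one_right]; rfl
      · refine ⟨[(fun _ => (1 : ℤ), ⁅h₁ ^ P 0, h₂ ^ Q 0⁆)], ?_, fun m => ?_,
          fun hv => absurd hv h0⟩
        · intro x hx
          rw [List.mem_singleton] at hx
          subst hx
          exact ⟨a + b + 1, 0, le_rfl, mem_lcs_comm (zpow_mem hh₁ _) (zpow_mem hh₂ _),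
            isBin_const 1, by omega⟩
        · rw [isBin_zero_eval hP m, isBin_zero_eval hQ m, evalL_singleton, zpow_one]
    -- main monomial swap, by induction on total degree
    have swapmono : ∀ D dP dQ, dP + dQ ≤ D → ∀ a b t₁' t₂' (h₁ h₂ : H) (P Q : ℕ → ℤ),
        l₁ ≤ a → l₂ ≤ b →
        h₁ ∈ lowerCentralSeries H a → h₂ ∈ lowerCentralSeries H b →
        IsBin dP P → IsBin dQ Q → dP + t₁' ≤ a + 1 → dQ + t₂' ≤ b + 1 →
        ∃ ms, GoodL (a + b + 1) (t₁' + t₂') ms ∧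
          (∀ m, ⁅h₁ ^ P m, h₂ ^ Q m⁆ = evalL ms m) ∧
          ((P 0 = 0 ∨ Q 0 = 0) → VAN ms) := by
      intro D
      induction D with
      | zero =>
        intro dP dQ hD a b t₁' t₂' h₁ h₂ P Q ha hb hh₁ hh₂ hP hQ hm₁ hm₂
        obtain ⟨rfl, rfl⟩ : dP = 0 ∧ dQ = 0 := by omega
        exact swapconst a b t₁' t₂' h₁ h₂ P Q ha hb hh₁ hh₂ hP hQ (by omega) (by omega)
      | succ D ihD =>
        intro dP dQ hD a b t₁' t₂' h₁ h₂ P Q ha hb hh₁ hh₂ hP hQ hm₁ hm₂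
        by_cases hz : dP = 0 ∧ dQ = 0
        · obtain ⟨rfl, rfl⟩ := hz
          exact swapconst a b t₁' t₂' h₁ h₂ P Q ha hb hh₁ hh₂ hP hQ (by omega) (by omega)
        -- the C₁ piece : conjugated ⁅h₁ ^ δP m, h₂ ^ Q (m+1)⁆
        have hC1 : ∃ msC1, GoodL (a + b + 1) (t₁' + t₂' + 1) msC1 ∧
            ∀ m, h₁ ^ P m * ⁅h₁ ^ (P (m+1) - P m), h₂ ^ Q (m+1)⁆ * (h₁ ^ P m)⁻¹
              = evalL msC1 m := by
          by_cases hdP : dP = 0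
          · refine ⟨[], goodL_nil _ _, fun m => ?_⟩
            subst hdP
            have hd : P (m+1) - P m = 0 := by
              rw [isBin_zero_eval hP (m+1), isBin_zero_eval hP m]; ring
            rw [hd, zpow_zero, commutatorElement_one_left]
            simp
          · obtain ⟨d', rfl⟩ : ∃ d', dP = d' + 1 := ⟨dP - 1, by omega⟩
            obtain ⟨msU, hU, hUeval, -⟩ := ihD d' dQ (by omega) a b (t₁' + 1) t₂' h₁ h₂
              (fun m => P (m+1) - P m) (fun m => Q (m+1)) ha hb hh₁ hh₂
              (isBin_diff hP) (isBin_shift hQ) (by omega) (by omega)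
            obtain ⟨msC1, hC1g, hC1eval, -⟩ := conj_aux (a + b + 1) (t₁' + 1 + t₂') a t₁'
              msU [(P, h₁)] (by omega) hU
              (goodL_singleton ⟨a, d' + 1, le_rfl, hh₁, hP, by omega⟩)
            refine ⟨msC1, goodL_mono hC1g le_rfl (by omega), fun m => ?_⟩
            rw [← hC1eval m, evalL_singleton, ← hUeval m]
        -- the C₂ piece : ⁅h₁ ^ P m, h₂ ^ δQ m⁆
        have hC2 : ∃ msC2, GoodL (a + b + 1) (t₁' + t₂' + 1) msC2 ∧
            ∀ m, ⁅h₁ ^ P m, h₂ ^ (Q (m+1) - Q m)⁆ = evalL msC2 m := by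
          by_cases hdQ : dQ = 0
          · refine ⟨[], goodL_nil _ _, fun m => ?_⟩
            subst hdQ
            have hd : Q (m+1) - Q m = 0 := by
              rw [isBin_zero_eval hQ (m+1), isBin_zero_eval hQ m]; ring
            rw [hd, zpow_zero, commutatorElement_one_right]
            rfl
          · obtain ⟨d', rfl⟩ : ∃ d', dQ = d' + 1 := ⟨dQ - 1, by omega⟩
            obtain ⟨msC2, hC2g, hC2eval, -⟩ := ihD dP d' (by omega) a b t₁' (t₂' + 1) h₁ h₂
              P (fun m => Q (m+1) - Q m) ha hb hh₁ hh₂ hP (isBin_diff hQ) (by omega) (by omega)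
            exact ⟨msC2, goodL_mono hC2g le_rfl (by omega), hC2eval⟩
        obtain ⟨msC1, hC1g, hC1eval⟩ := hC1
        obtain ⟨msC2, hC2g, hC2eval⟩ := hC2
        -- D(m) = conjugate of C(m) by h₂ ^ (-(Q (m+1)))
        obtain ⟨msD, hDg, hDeval, -⟩ := conj_aux (a + b + 1) (t₁' + t₂' + 1) b t₂'
          (msC1 ++ msC2) [(fun m => -(Q (m+1)), h₂)] (by omega)
          (goodL_append hC1g hC2g)
          (goodL_singleton ⟨b, dQ, le_rfl, hh₂, isBin_neg (isBin_shift hQ), by omega⟩)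
        -- integrate the inverses of D
        obtain ⟨msI, hIg, hIvan, hIeval⟩ := IHI (a + b + 1) (by omega) (by omega)
          (t₁' + t₂') (invL msD) (goodL_invL hDg)
        -- the recursion step for G m := h₂^(-Q m) * F m * (h₂^(-Q m))⁻¹
        have step : ∀ m, h₂ ^ (-(Q (m+1))) * ⁅h₁ ^ P (m+1), h₂ ^ Q (m+1)⁆ * (h₂ ^ (-(Q (m+1))))⁻¹
            = evalL msD m * (h₂ ^ (-(Q m)) * ⁅h₁ ^ P m, h₂ ^ Q m⁆ * (h₂ ^ (-(Q m)))⁻¹) := by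
          intro m
          rw [← hDeval m, evalL_singleton, evalL_append, ← hC1eval m, ← hC2eval m]
          have e1 : h₁ ^ P (m+1) = h₁ ^ P m * h₁ ^ (P (m+1) - P m) := by
            rw [← zpow_add]; congr 1; ring
          have e2 : h₂ ^ Q (m+1) = h₂ ^ (Q (m+1) - Q m) * h₂ ^ Q m := by
            rw [← zpow_add]; congr 1; ring
          rw [e1, e2, comm_mul_left, comm_mul_right]
          group
        have hInv : ∀ m, evalL (invL msI) (m+1) = evalL msD m * evalL (invL msI) m := by
          intro m
          rw [evalL_invL, evalL_invL, ← hIeval (m+1), ← hIeval m, PP_succ, mul_inv_rev,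
            evalL_invL]
          group
        -- assemble the sequence G
        obtain ⟨msG, hGg, hGvan, hGeval⟩ :
            ∃ msG, GoodL (a + b + 1) (t₁' + t₂') msG ∧
              ((P 0 = 0 ∨ Q 0 = 0) → VAN msG) ∧
              ∀ m, h₂ ^ (-(Q m)) * ⁅h₁ ^ P m, h₂ ^ Q m⁆ * (h₂ ^ (-(Q m)))⁻¹ = evalL msG m := by
          by_cases h0 : P 0 = 0 ∨ Q 0 = 0
          · refine ⟨invL msI, goodL_invL hIg, fun _ => van_invL hIvan, fun m => ?_⟩
            induction m with
            | zero =>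
              rw [evalL_invL, evalL_van_zero hIvan, inv_one]
              rcases h0 with h0 | h0
              · rw [h0, zpow_zero, commutatorElement_one_left]; group
              · rw [h0, zpow_zero, commutatorElement_one_right]; group
            | succ m ihm => rw [step m, ihm, hInv m]
          · set G0v : H := h₂ ^ (-(Q 0)) * ⁅h₁ ^ P 0, h₂ ^ Q 0⁆ * (h₂ ^ (-(Q 0)))⁻¹ with hG0v
            have hG0mem : G0v ∈ lowerCentralSeries H (a + b + 1) :=
              (Subgroup.lowerCentralSeries_normal (⊤ : Subgroup H) (a+b+1)).conj_mem _
                (mem_lcs_comm (zpow_mem hh₁ _) (zpow_mem hh₂ _)) _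
            refine ⟨invL msI ++ [(fun _ => (1 : ℤ), G0v)], ?_, fun hv => absurd hv h0, fun m => ?_⟩
            · refine goodL_append (goodL_invL hIg) ?_
              intro x hx
              rw [List.mem_singleton] at hx
              subst hx
              exact ⟨a + b + 1, 0, le_rfl, hG0mem, isBin_const 1, by omega⟩
            · induction m with
              | zero =>
                rw [evalL_append, evalL_invL, evalL_van_zero hIvan, inv_one, one_mul,
                  evalL_singleton, zpow_one]
              | succ m ihm =>
                rw [step m, ihm, evalL_append, evalL_append, evalL_invL, evalL_invL,
                  ← hIeval (m+1), ← hIeval m, PP_succ, mul_inv_rev, evalL_invL]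
                rw [evalL_singleton, evalL_singleton]
                group
        -- finally undo the conjugation by h₂ ^ Q m
        obtain ⟨msF, hFg, hFeval, hFvan⟩ := conj_aux (a + b + 1) (t₁' + t₂') b t₂'
          msG [(Q, h₂)] (by omega) hGg
          (goodL_singleton ⟨b, dQ, le_rfl, hh₂, hQ, by omega⟩)
        refine ⟨msF, hFg, fun m => ?_, fun h0 => hFvan (hGvan h0)⟩
        rw [← hFeval m, evalL_singleton, ← hGeval m]
        group
    -- swap of a single monomial against a list
    have swapA : ∀ (x : (ℕ → ℤ) × H), MonoP l₁ t₁ x → ∀ (ms₂' : List ((ℕ → ℤ) × H)),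
        GoodL l₂ t₂ ms₂' →
        ∃ ms, GoodL (l₁ + l₂ + 1) (t₁ + t₂) ms ∧
          (∀ n, ⁅x.2 ^ x.1 n, evalL ms₂' n⁆ = evalL ms n) ∧
          ((x.1 0 = 0 ∨ VAN ms₂') → VAN ms) := by
      intro x hx ms₂'
      induction ms₂' with
      | nil =>
        intro _
        refine ⟨[], goodL_nil _ _, fun n => ?_, fun _ => van_nil⟩
        rw [show evalL ([] : List ((ℕ → ℤ) × H)) n = 1 from rfl, commutatorElement_one_right]
      | cons y rest ihy =>
        intro hg
        obtain ⟨msR, hRg, hReval, hRvan⟩ := ihy fun z hz => hg z (List.mem_cons_of_mem _ hz)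
        obtain ⟨la, da, hla, hxa, hba, hda⟩ := hx
        obtain ⟨lb, db, hlb, hyb, hbb, hdb⟩ := hg y (List.mem_cons_self)
        obtain ⟨msAY, hAYg, hAYeval, hAYvan⟩ := swapmono (da + db) da db le_rfl la lb t₁ t₂
          x.2 y.2 x.1 y.1 hla hlb hxa hyb hba hbb (by omega) (by omega)
        obtain ⟨msCR, hCRg, hCReval, hCRvan⟩ := conj_aux (l₁ + l₂ + 1) (t₁ + t₂) l₂ t₂
          msR [y] (by omega) hRg
          (goodL_singleton (hg y (List.mem_cons_self)))
        refine ⟨msAY ++ msCR, goodL_append (goodL_mono hAYg (by omega) le_rfl) hCRg,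
          fun n => ?_, fun hv => ?_⟩
        · rw [evalL_append, evalL_cons, comm_mul_right, ← hAYeval n, ← hCReval n,
            evalL_singleton, ← hReval n]
        · refine van_append (hAYvan ?_) (hCRvan (hRvan ?_))
          · rcases hv with hv | hv
            · exact Or.inl hv
            · exact Or.inr (hv y (List.mem_cons_self))
          · rcases hv with hv | hv
            · exact Or.inl hv
            · exact Or.inr fun z hz => hv z (List.mem_cons_of_mem _ hz)
    -- swap of two lists
    induction ms₁ with
    | nil =>
      refine ⟨[], goodL_nil _ _, fun n => ?_, fun _ => van_nil⟩
      rw [show evalL ([] : List ((ℕ → ℤ) × H)) n = 1 from rfl, commutatorElement_one_left]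
    | cons x rest ihx =>
      obtain ⟨msR, hRg, hReval, hRvan⟩ := ihx fun z hz => hms₁ z (List.mem_cons_of_mem _ hz)
      obtain ⟨msCR, hCRg, hCReval, hCRvan⟩ := conj_aux (l₁ + l₂ + 1) (t₁ + t₂) l₁ t₁
        msR [x] (by omega) hRg
        (goodL_singleton (hms₁ x (List.mem_cons_self)))
      obtain ⟨msX, hXg, hXeval, hXvan⟩ := swapA x (hms₁ x (List.mem_cons_self)) ms₂ hms₂
      refine ⟨msCR ++ msX, goodL_append hCRg hXg, fun n => ?_, fun hv => ?_⟩
      · rw [evalL_append, evalL_cons, comm_mul_left, ← hCReval n, ← hXeval n,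
          evalL_singleton, ← hReval n]
      · refine van_append (hCRvan (hRvan ?_)) (hXvan ?_)
        · rcases hv with hv | hv
          · exact Or.inl fun z hz => hv z (List.mem_cons_of_mem _ hz)
          · exact Or.inr hv
        · rcases hv with hv | hv
          · exact Or.inl (hv x (List.mem_cons_self))
          · exact Or.inr hv
  · -- INT part
    intro lm hlm hμ t ms hms
    by_cases hbase : c ≤ lm
    · -- trivial case
      have hone : ∀ n, evalL ms n = 1 := by
        intro n
        refine evalL_eq_one (fun x hx => ?_) n
        obtain ⟨l, d, hl, hmem, -, -⟩ := hms x hx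
        have : lowerCentralSeries H l ≤ ⊥ := by
          rw [← hc]; exact lcs_le_of_le (by omega)
        simpa using this hmem
      refine ⟨[], goodL_nil _ _, van_nil, fun n => ?_⟩
      rw [PP_congr hone n, PP_one]
      rfl
    push_neg at hbase
    have hμ1 : 1 ≤ μ := by omega
    have IHS : SwapStmt c H (μ - 1) := (IH (μ - 1) (by omega)).1
    have IHI : IntStmt c H (μ - 1) := (IH (μ - 1) (by omega)).2
    -- auxiliary integration with a deep spectator list
    have intaux : ∀ (msB : List ((ℕ → ℤ) × H)), GoodL lm (t + 1) msB →
        ∀ (msW : List ((ℕ → ℤ) × H)), GoodL (lm + 1) (t + 1) msW →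
        ∃ ms', GoodL lm t ms' ∧ VAN ms' ∧
          ∀ n, PP (fun m => evalL msB m * evalL msW m) n = evalL ms' n := by
      intro msB
      induction msB with
      | nil =>
        intro _ msW hW
        obtain ⟨ms', hg, hvan, heval⟩ := IHI (lm + 1) (by omega) (by omega) t msW hW
        refine ⟨ms', goodL_mono hg (by omega) le_rfl, hvan, fun n => ?_⟩
        rw [← heval n]
        refine PP_congr (fun m => ?_) n
        show evalL ([] : List ((ℕ → ℤ) × H)) m * evalL msW m = evalL msW m
        rw [show evalL ([] : List ((ℕ → ℤ) × H)) m = 1 from rfl, one_mul]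
      | cons x msB' ihB =>
        intro hB msW hW
        have hBx := hB x (List.mem_cons_self)
        obtain ⟨lA, dA, hlA, hxA, hbA, hdA⟩ := hBx
        have hB' : GoodL lm (t + 1) msB' := fun z hz => hB z (List.mem_cons_of_mem _ hz)
        -- the sum exponent
        set eS : ℕ → ℤ := fun n => ∑ m ∈ Finset.range n, x.1 m with heS
        have hbS : IsBin (dA + 1) eS := isBin_sum hbA
        -- corrections from the telescoping conjugation
        obtain ⟨msC, hCg, hCeval, -⟩ := IHS lm lA (by omega) (t + 1) t
          (invL (msB' ++ msW)) [(fun m => eS (m+1), x.2)]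
          (goodL_invL (goodL_append hB' (goodL_mono hW (by omega) le_rfl)))
          (goodL_singleton ⟨lA, dA + 1, le_rfl, hxA, isBin_shift hbS, by omega⟩)
        have hCg' : GoodL (lm + 1) (t + 1) msC := goodL_mono hCg (by omega) (by omega)
        obtain ⟨ms'', hg'', hvan'', heval''⟩ := ihB hB' (msW ++ msC)
          (goodL_append hW hCg')
        refine ⟨ms'' ++ [(eS, x.2)], ?_, ?_, fun n => ?_⟩
        · refine goodL_append hg'' ?_
          intro z hz
          rw [List.mem_singleton] at hz
          subst hz
          exact ⟨lA, dA + 1, hlA, hxA, hbS, by omega⟩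
        · refine van_append hvan'' ?_
          intro z hz
          rw [List.mem_singleton] at hz
          subst hz
          simp [heS]
        · have htel := PP_telescope (fun m => x.2 ^ (x.1 m))
            (fun m => evalL msB' m * evalL msW m) (fun m => x.2 ^ (eS m))
            (by simp [heS])
            (by
              intro m
              simp only [heS]
              rw [Finset.sum_range_succ, zpow_add]) n
          rw [PP_congr (f := fun m => evalL ((x :: msB') : List ((ℕ → ℤ) × H)) m * evalL msW m)
            (g := fun m => x.2 ^ (x.1 m) * (evalL msB' m * evalL msW m))
            (fun m => by simp [evalL_cons, mul_assoc]) n, htel]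
          rw [evalL_append, evalL_singleton]
          congr 1
          rw [← heval'' n]
          refine PP_congr (fun m => ?_) n
          show x.2 ^ (eS (m+1)) * (evalL msB' m * evalL msW m) * (x.2 ^ (eS (m+1)))⁻¹
            = evalL msB' m * evalL (msW ++ msC) m
          rw [conj_eq_mul_comm, evalL_append (ms₁ := msW) (ms₂ := msC), ← hCeval m,
            evalL_singleton, evalL_invL, evalL_append (ms₁ := msB') (ms₂ := msW)]
          group
    obtain ⟨ms', hg, hvan, heval⟩ := intaux ms hms [] (goodL_nil _ _)
    refine ⟨ms', hg, hvan, fun n => ?_⟩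
    rw [← heval n]
    refine PP_congr (fun m => ?_) n
    show evalL ms m = evalL ms m * evalL ([] : List ((ℕ → ℤ) × H)) m
    rw [show evalL ([] : List ((ℕ → ℤ) × H)) m = 1 from rfl, mul_one]

end HallAux


namespace HallAux

variable {H : Type*} [Group H]

/-- Hall's collection lemma: in a nilpotent group, `(a*b)^n = a^n * b^n * (good tail)`. -/
theorem collect (c : ℕ) (hc : lowerCentralSeries H c = ⊥) (a b : H) :
    ∃ ms, GoodL 1 0 ms ∧ VAN ms ∧ ∀ n : ℕ, (a * b) ^ n = a ^ n * b ^ n * evalL ms n := by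
  obtain ⟨SW, INT⟩ := master c hc c
  obtain ⟨msU, hUg, hUeval, hUvan⟩ := SW 0 0 (by omega) 1 0
    [(fun _ => (1 : ℤ), b⁻¹)] [(fun m => (m : ℤ), a⁻¹)]
    (goodL_singleton ⟨0, 0, le_rfl, Subgroup.mem_top _, isBin_const 1, by omega⟩)
    (goodL_singleton ⟨0, 1, le_rfl, Subgroup.mem_top _, isBin_id, by omega⟩)
  have hUvan' : VAN msU := hUvan (Or.inr (by
    intro z hz
    rw [List.mem_singleton] at hz
    subst hz
    simp))
  obtain ⟨msW, hWg, hWeval, hWvan⟩ := SW 1 0 (by omega) 1 0 (invL msU)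
    [(fun m => -(m : ℤ), b)]
    (goodL_invL hUg)
    (goodL_singleton ⟨0, 1, le_rfl, Subgroup.mem_top _, isBin_neg isBin_id, by omega⟩)
  have hWvan' : VAN msW := hWvan (Or.inl (van_invL hUvan'))
  set msS := msU ++ msW with hmsS
  have hSg : GoodL 1 1 msS := goodL_append hUg (goodL_mono hWg (by omega) le_rfl)
  have hSvan : VAN msS := van_append hUvan' hWvan'
  have hSeval : ∀ m : ℕ, evalL msS m
      = b ^ (-(m : ℤ)) * evalL msU m * (b ^ (-(m : ℤ)))⁻¹ := by
    intro m
    rw [conj_eq_mul_comm, hmsS, evalL_append, ← evalL_invL msU m]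
    congr 1
    rw [← hWeval m, evalL_singleton]
  obtain ⟨msP, hPg, hPvan, hPeval⟩ := INT 1 le_rfl (by omega) 0 (invL msS)
    (goodL_invL hSg)
  refine ⟨invL msP, goodL_invL hPg, van_invL hPvan, fun n => ?_⟩
  induction n with
  | zero => simp [evalL_invL, evalL_van_zero hPvan]
  | succ n ih =>
    have hstep : evalL (invL msP) (n+1) = evalL msS n * evalL (invL msP) n := by
      rw [evalL_invL, evalL_invL, ← hPeval (n+1), ← hPeval n, PP_succ, mul_inv_rev,
        evalL_invL, inv_inv]
    rw [hstep, hSeval n, ← hUeval n, evalL_singleton, evalL_singleton]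
    have ih' : evalL (invL msP) n = (a ^ n * b ^ n)⁻¹ * (a * b) ^ n := by
      rw [ih]; group
    rw [ih', pow_succ (a*b) n]
    beta_reduce
    rw [commutatorElement_def]
    rw [zpow_one, ← zpow_natCast a n, ← zpow_natCast b n, ← zpow_natCast (a*b) n]
    group
    rw [mul_assoc, ← zpow_add_one, add_comm]

end HallAux


namespace HallAux

/-- `p^(k - v_p(j))` divides `C(p^k, j)` for `1 ≤ j`. -/
theorem pow_dvd_choose_pow (p k j : ℕ) (hp : p.Prime) (hj : 1 ≤ j) :
    p ^ (k - min (j.factorization p) k) ∣ (p ^ k).choose j := by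
  set v := j.factorization p with hv
  by_cases hvk : k ≤ v
  · rw [Nat.min_eq_right hvk] at *
    simp
  push_neg at hvk
  rw [Nat.min_eq_left (le_of_lt hvk)]
  -- p^k ∣ choose * j
  have h1 : p ^ k ∣ (p ^ k).choose j * j := by
    have h := Nat.add_one_mul_choose_eq (p ^ k - 1) (j - 1)
    have hq1 : (p ^ k - 1) + 1 = p ^ k := Nat.succ_pred_eq_of_pos (pow_pos hp.pos k)
    have hj1 : (j - 1) + 1 = j := Nat.succ_pred_eq_of_pos hj
    rw [hq1, hj1] at h
    exact ⟨(p ^ k - 1).choose (j - 1), by omega⟩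
  have hj0 : j ≠ 0 := by omega
  have h2 : p ^ (k - v) * p ^ v ∣ ((p ^ k).choose j * ordCompl[p] j) * p ^ v := by
    rw [← pow_add]
    have he : k - v + v = k := by omega
    rw [he]
    have he2 : (p ^ k).choose j * ordCompl[p] j * p ^ v = (p ^ k).choose j * j := by
      rw [mul_assoc, Nat.div_mul_cancel (Nat.ordProj_dvd j p)]
    rw [he2]
    exact h1
  have h3 : p ^ (k - v) ∣ (p ^ k).choose j * ordCompl[p] j :=
    (Nat.mul_dvd_mul_iff_right (pow_pos hp.pos v)).mp h2
  have hcop : Nat.Coprime (p ^ (k - v)) (ordCompl[p] j) :=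
    Nat.Coprime.pow_left _ ((Nat.Prime.coprime_iff_not_dvd hp).mpr (Nat.not_dvd_ordCompl hp hj0))
  exact hcop.dvd_of_dvd_mul_right h3

end HallAux



/-- Commutator `[x, y] = x⁻¹ * y⁻¹ * x * y`. -/
def comm' {G : Type*} [Group G] (x y : G) : G := x⁻¹ * y⁻¹ * x * y

/-- `spow H n` is the subgroup `H^n` generated by all `n`-th powers of elements of `H`. -/
def spow {G : Type*} [Group G] (H : Subgroup G) (n : ℕ) : Subgroup G :=
  Subgroup.closure {x | ∃ h ∈ H, x = h ^ n}

/-- **P. Hall's collection formula (commutator form).** For elements `x, y` of a finite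
`p`-group `G` and `k ≥ 0`, `[x,y]^{p^k} ≡ [x^{p^k}, y]` modulo
`γ_2(M)^{p^k} γ_p(M)^{p^{k-1}} γ_{p²}(M)^{p^{k-2}} ⋯ γ_{p^k}(M)`, where
`M = ⟨x, [x,y]⟩` and `[x,y] = x⁻¹y⁻¹xy`.
(The `i`-th factor, `0 ≤ i ≤ k`, is `γ_2(M)^{p^k}` for `i = 0` and
`γ_{p^i}(M)^{p^{k-i}}` for `i ≥ 1`; `γ_j(M) = lowerCentralSeries M (j-1)`, and the
product of these subgroups, each normal in `M`, is their join.) -/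
theorem hall_collection_formula_commutator (p : ℕ) (hp : p.Prime) (G : Type*) [Group G]
    [Finite G] (hG : IsPGroup p G) (x y : G) (k : ℕ) :
    (comm' x y) ^ p ^ k * (comm' (x ^ p ^ k) y)⁻¹ ∈
      ⨆ i ∈ Finset.range (k + 1),
        spow (Subgroup.map (Subgroup.closure {x, comm' x y}).subtype
            (Subgroup.lowerCentralSeries (⊤ : Subgroup ↥(Subgroup.closure {x, comm' x y}))
              (if i = 0 then 1 else p ^ i - 1)))
          (p ^ (k - i)) := by
  haveI : Fact p.Prime := ⟨hp⟩
  set M := Subgroup.closure {x, comm' x y} with hMdef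
  set K := ⨆ i ∈ Finset.range (k + 1),
      spow (Subgroup.map M.subtype
          (Subgroup.lowerCentralSeries (⊤ : Subgroup ↥M) (if i = 0 then 1 else p ^ i - 1)))
        (p ^ (k - i)) with hKdef
  show (comm' x y) ^ p ^ k * (comm' (x ^ p ^ k) y)⁻¹ ∈ K
  have hxM : x ∈ M := Subgroup.subset_closure (Set.mem_insert _ _)
  have hcM : comm' x y ∈ M := Subgroup.subset_closure (Set.mem_insert_of_mem _ rfl)
  set a : ↥M := ⟨x, hxM⟩ with ha
  set b : ↥M := ⟨comm' x y, hcM⟩ with hb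
  have hnil : Group.IsNilpotent ↥M := (hG.to_subgroup M).isNilpotent
  obtain ⟨c, hc⟩ := Subgroup.nilpotent_iff_lowerCentralSeries.mp hnil
  obtain ⟨ms, hg, hvan, heval⟩ := HallAux.collect c hc a b
  set q := p ^ k with hq
  -- membership of a single monomial value in K
  have memMono : ∀ (e : ℕ → ℤ) (h : ↥M), HallAux.MonoP 1 0 (e, h) → e 0 = 0 →
      ((h ^ (e q) : ↥M) : G) ∈ K := by
    intro e h hmono h0
    obtain ⟨l, d, hl, hmem, hbin, hd⟩ := hmono
    have hbin' : HallAux.IsBin d e := hbin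
    have hmem' : h ∈ HallAux.lowerCentralSeries ↥M l := hmem
    obtain ⟨co, hco0, hco⟩ := hbin'
    have hc0 : co 0 = 0 := by
      have h00 := hco 0
      rw [h0] at h00
      rw [Finset.sum_eq_single 0 (fun j _ hj => by
        rw [Nat.choose_eq_zero_of_lt (Nat.pos_of_ne_zero hj)]; simp) (fun hn => by simp at hn)]
        at h00
      simpa using h00.symm
    -- single term membership
    have hterm : ∀ j, j ≤ d → ((h ^ (co j * (q.choose j : ℤ)) : ↥M) : G) ∈ K := by
      intro j hjd
      rcases Nat.eq_zero_or_pos j with rfl | hj1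
      · rw [hc0]
        simp only [zero_mul, zpow_zero]
        exact one_mem K
      by_cases hch : q.choose j = 0
      · rw [hch]
        simp only [Nat.cast_zero, mul_zero, zpow_zero]
        exact one_mem K
      set v := j.factorization p with hv
      set i := min v k with hi
      have hdvd : p ^ (k - i) ∣ q.choose j := HallAux.pow_dvd_choose_pow p k j hp hj1
      have hiK : i ∈ Finset.range (k + 1) := Finset.mem_range.mpr (by omega)
      have hidx : (if i = 0 then 1 else p ^ i - 1) ≤ l := by
        by_cases hi0 : i = 0
        · rw [if_pos hi0]; exact hl
        · rw [if_neg hi0]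
          have hpv : p ^ i ≤ j := by
            calc p ^ i ≤ p ^ v := Nat.pow_le_pow_right hp.pos (min_le_left v k)
              _ ≤ j := Nat.le_of_dvd (by omega) (Nat.ordProj_dvd j p)
          omega
      have hmem2 : h ^ (co j) ∈ Subgroup.lowerCentralSeries (⊤ : Subgroup ↥M) (if i = 0 then 1 else p ^ i - 1) :=
        HallAux.lcs_le_of_le hidx (zpow_mem hmem' _)
      have hcoe : ((h ^ (co j * (q.choose j : ℤ)) : ↥M) : G)
          = (((h ^ (co j) : ↥M) : G) ^ (q.choose j / p ^ (k - i))) ^ (p ^ (k - i)) := by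
        rw [← pow_mul, Nat.div_mul_cancel hdvd]
        push_cast
        rw [zpow_mul, zpow_natCast]
      rw [hcoe]
      have hwmem : ((h ^ (co j) : ↥M) : G) ^ (q.choose j / p ^ (k - i))
          ∈ Subgroup.map M.subtype
            (Subgroup.lowerCentralSeries (⊤ : Subgroup ↥M) (if i = 0 then 1 else p ^ i - 1)) :=
        pow_mem (Subgroup.mem_map_of_mem M.subtype hmem2) _
      have : (((h ^ (co j) : ↥M) : G) ^ (q.choose j / p ^ (k - i))) ^ (p ^ (k - i))
          ∈ spow (Subgroup.map M.subtype
            (Subgroup.lowerCentralSeries (⊤ : Subgroup ↥M) (if i = 0 then 1 else p ^ i - 1))) (p ^ (k - i)) :=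
        Subgroup.subset_closure ⟨_, hwmem, rfl⟩
      rw [hKdef]
      exact Subgroup.mem_iSup_of_mem i (Subgroup.mem_iSup_of_mem hiK this)
    -- sum splitting
    have hsum : ∀ N, N ≤ d + 1 →
        ((h ^ (∑ j ∈ Finset.range N, co j * (q.choose j : ℤ)) : ↥M) : G) ∈ K := by
      intro N
      induction N with
      | zero => intro _; simp
      | succ N ihN =>
        intro hN
        rw [Finset.sum_range_succ, zpow_add]
        push_cast
        exact mul_mem (ihN (by omega)) (hterm N (by omega))
    have := hsum (d + 1) le_rfl
    rwa [← hco q] at this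
  -- membership of the value of a good vanishing list
  have memList : ∀ ms' : List ((ℕ → ℤ) × ↥M), HallAux.GoodL 1 0 ms' → HallAux.VAN ms' →
      ((HallAux.evalL ms' q : ↥M) : G) ∈ K := by
    intro ms'
    induction ms' with
    | nil => intro _ _; simp [HallAux.evalL]
    | cons z rest ih =>
      intro hgz hvz
      rw [HallAux.evalL_cons]
      push_cast
      refine mul_mem ?_ (ih (fun w hw => hgz w (List.mem_cons_of_mem _ hw))
        (fun w hw => hvz w (List.mem_cons_of_mem _ hw)))
      have := memMono z.1 z.2 (hgz z (List.mem_cons_self)) (hvz z (List.mem_cons_self))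
      push_cast at this
      exact this
  -- the key algebraic rewriting
  have hcomm : comm' (x ^ q) y = (x ^ q)⁻¹ * (x * comm' x y) ^ q := by
    have h1 : x * comm' x y = y⁻¹ * x * y⁻¹⁻¹ := by
      simp only [comm']
      group
    rw [h1, conj_pow]
    simp only [comm']
    group
  have key : (a * b) ^ q = a ^ q * b ^ q * HallAux.evalL ms q := heval q
  have hMel : b ^ q * ((a ^ q)⁻¹ * (a * b) ^ q)⁻¹
      = b ^ q * (HallAux.evalL ms q)⁻¹ * (b ^ q)⁻¹ := by
    rw [key]
    group
  have hgoal : (comm' x y) ^ q * (comm' (x ^ q) y)⁻¹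
      = ((b ^ q * ((a ^ q)⁻¹ * (a * b) ^ q)⁻¹ : ↥M) : G) := by
    rw [hcomm]
    push_cast
    rfl
  rw [hgoal, hMel]
  have hfin : b ^ q * (HallAux.evalL ms q)⁻¹ * (b ^ q)⁻¹
      = HallAux.evalL (HallAux.conjL (b ^ q) (HallAux.invL ms)) q := by
    rw [HallAux.evalL_conjL, HallAux.evalL_invL]
  rw [hfin]
  exact memList _ (HallAux.goodL_conjL (HallAux.goodL_invL hg))
    (HallAux.van_conjL (HallAux.van_invL hvan))
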